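/- (Certified robustness of multi-label smoothing based watermarking.) Let g map images to k-element subsets of {1,…,m}, let L = {i : w_t[i]=1} with |L| = ‖w_t‖₁, and define D_s(z)[i] = 1 iff i ∈ g(z). Suppose e̲ and e̅ satisfy |L ∩ g(x+δ)| ≥ e̲ and |(complement of L) ∩ g(x+δ)| ≥ e̅ for all ‖δ‖₂ < R. Then for all ‖δ‖₂ < R: 1 − (‖w_t‖₁ + k − 2e̲)/m ≤ BA(D_s(x+δ), w_t) ≤ 1 − (‖w_t‖₁ − k + 2e̅)/m. -/
import Mathlib


open Finset

/-- Bitwise accuracy: fraction of indices where the two bitstrings agree. -/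
noncomputable def BA (m : ℕ) (w wt : Fin m → Bool) : ℝ :=
  ((univ.filter fun i => w i = wt i).card : ℝ) / m

theorem stmt16 {E : Type*} [NormedAddCommGroup E] (m k : ℕ) (hm : 0 < m)
    (wt : Fin m → Bool) (L : Finset (Fin m))
    (hL : L = univ.filter fun i => wt i = true)
    (g : E → Finset (Fin m)) (hk : ∀ z, (g z).card = k)
    (Ds : E → Fin m → Bool) (hDs : Ds = fun z i => decide (i ∈ g z))
    (x : E) (R : ℝ) (elow eup : ℕ)
    (helow : ∀ δ : E, ‖δ‖ < R → elow ≤ (L ∩ g (x + δ)).card)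
    (heup : ∀ δ : E, ‖δ‖ < R → eup ≤ (Lᶜ ∩ g (x + δ)).card) :
    ∀ δ : E, ‖δ‖ < R →
      1 - ((L.card : ℝ) + k - 2 * elow) / m ≤ BA m (Ds (x + δ)) wt ∧
        BA m (Ds (x + δ)) wt ≤ 1 - ((L.card : ℝ) - k + 2 * eup) / m := by
  intro δ hδ
  subst hDs
  set A := g (x + δ) with hA
  have hmemL : ∀ i : Fin m, i ∈ L ↔ wt i = true := by
    intro i; rw [hL]; simp
  have hS : (univ.filter fun i => (decide (i ∈ A)) = wt i)
      = (L ∩ A) ∪ (L ∪ A)ᶜ := by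
    ext i
    simp only [mem_filter, mem_univ, true_and, mem_union, mem_inter, mem_compl,
      not_or, decide_eq_true_eq]
    have hw := hmemL i
    cases hwt : wt i <;> rw [hwt] at hw <;>
      by_cases h2 : i ∈ A <;> simp_all
  have hdisj : Disjoint (L ∩ A) (L ∪ A)ᶜ := by
    exact disjoint_compl_right.mono_left (inter_subset_left.trans subset_union_left)
  have h1 : (L ∩ A).card + (Lᶜ ∩ A).card = k := by
    have : Lᶜ ∩ A = A \ L := by ext i; simp [mem_sdiff, and_comm]
    rw [this, inter_comm, card_inter_add_card_sdiff, hk]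
  have h2 : (L ∪ A).card + (L ∩ A).card = L.card + k := by
    rw [card_union_add_card_inter, hk]
  have h3 : (L ∪ A).card + ((L ∪ A)ᶜ).card = m := by
    rw [card_add_card_compl]; simp
  have hBA : BA m (fun i => decide (i ∈ A)) wt
      = ((L ∩ A).card + ((L ∪ A)ᶜ).card : ℝ) / m := by
    unfold BA
    rw [hS, card_union_of_disjoint hdisj]
    push_cast; ring
  have hlow := helow δ hδ
  have hup := heup δ hδ
  have hmR : (0:ℝ) < m := by exact_mod_cast hm
  -- cast facts to ℝ
  have h1' : ((L ∩ A).card : ℝ) + ((Lᶜ ∩ A).card : ℝ) = k := by exact_mod_cast h1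
  have h2' : ((L ∪ A).card : ℝ) + ((L ∩ A).card : ℝ) = (L.card : ℝ) + k := by
    exact_mod_cast h2
  have h3' : ((L ∪ A).card : ℝ) + (((L ∪ A)ᶜ).card : ℝ) = m := by exact_mod_cast h3
  have hlow' : (elow : ℝ) ≤ ((L ∩ A).card : ℝ) := by exact_mod_cast hlow
  have hup' : (eup : ℝ) ≤ ((Lᶜ ∩ A).card : ℝ) := by exact_mod_cast hup
  rw [hBA]
  constructor
  · rw [le_div_iff₀ hmR]
    have : (1 - ((L.card : ℝ) + k - 2 * elow) / m) * m
        = m - ((L.card : ℝ) + k - 2 * elow) := by field_simp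
    rw [this]; linarith
  · rw [div_le_iff₀ hmR]
    have : (1 - ((L.card : ℝ) - k + 2 * eup) / m) * m
        = m - ((L.card : ℝ) - k + 2 * eup) := by field_simp
    rw [this]; linarith
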